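/- For two coprime integers a, b ≥ 2 and every integer m ≥ 2, m(m−1)·S_{m−2} = ∑_{j=0}^{m} C(m,j)·a^{m−1−j}·B_{m−j}·b^{j−1}·φ_j(a) − m·B_{m−1}, where φ_j(x) = B_j(x) − B_j (here the terms with j = 0 vanish since φ₀ ≡ 0, and the factors a^{m−1−j}, b^{j−1} may be interpreted in the rationals). -/

import Mathlib

open Finset

namespace SylvesterAux

lemma evalB (n : ℕ) (x : ℚ) :
    (Polynomial.bernoulli n).eval x
      = ∑ i ∈ range (n + 1), bernoulli i * (n.choose i : ℚ) * x ^ (n - i) := by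
  rw [Polynomial.bernoulli, Polynomial.eval_finset_sum]
  exact sum_congr rfl fun i _ => by rw [Polynomial.eval_monomial]

lemma tele (p : ℕ) (x : ℚ) (N : ℕ) :
    ((p : ℚ) + 1) * ∑ u ∈ range N, (x + u) ^ p
      = (Polynomial.bernoulli (p + 1)).eval (x + N) - (Polynomial.bernoulli (p + 1)).eval x := by
  induction N with
  | zero => simp
  | succ N ih =>
    rw [sum_range_succ, mul_add, ih]
    have h := Polynomial.bernoulli_eval_one_add (p + 1) (x + N)
    simp only [Nat.add_sub_cancel] at h
    push_cast
    rw [show x + ((N : ℚ) + 1) = 1 + (x + N) by ring, h]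
    push_cast
    ring

noncomputable def psi (a q : ℕ) : ℚ :=
  ((Polynomial.bernoulli (q + 1)).eval (a : ℚ) - bernoulli (q + 1)) / ((q : ℚ) + 1)

lemma psum (a q : ℕ) : ∑ t ∈ range a, (t : ℚ) ^ q = psi a q := by
  have hq : ((q : ℚ) + 1) ≠ 0 := by positivity
  have h := Polynomial.sum_range_pow_eq_bernoulli_sub a q
  rw [psi, eq_div_iff hq, mul_comm]
  exact_mod_cast h

lemma expand (n a : ℕ) (w : ℚ) :
    ∑ t ∈ range a, (Polynomial.bernoulli n).eval (w * t)
      = ∑ i ∈ range (n + 1), bernoulli i * (n.choose i : ℚ) * w ^ (n - i) * psi a (n - i) := by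
  simp_rw [evalB, mul_pow]
  rw [Finset.sum_comm]
  refine sum_congr rfl fun i _ => ?_
  rw [← psum a (n - i), Finset.mul_sum]
  exact sum_congr rfl fun t _ => by ring

lemma triangle (N : ℕ) (f : ℕ → ℕ → ℚ) :
    ∑ i ∈ range N, ∑ l ∈ range (N - i), f i l = ∑ l ∈ range N, ∑ i ∈ range (N - l), f i l :=
  Finset.sum_comm' (by intro x y; simp only [mem_range]; omega)

lemma psi_eq (a q : ℕ) :
    psi a q = ∑ l ∈ range (q + 1),
      bernoulli l * ((q + 1).choose l : ℚ) * (a : ℚ) ^ (q + 1 - l) / ((q : ℚ) + 1) := by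
  rw [psi, evalB (q + 1) (a : ℚ), sum_range_succ]
  simp only [Nat.choose_self, Nat.sub_self, pow_zero, Nat.cast_one, mul_one]
  rw [add_sub_cancel_right, sum_div]


-- nat binomial identity: for 1 ≤ l, i + l ≤ n
lemma chooseNat (n i l : ℕ) (h1 : 1 ≤ l) (hil : i + l ≤ n) :
    n.choose i * ((n - i + 1).choose l * l)
      = n.choose (l - 1) * (n - l + 1).choose i * (n - i + 1) := by
  have h2 : (n - i + 1) * (n - i).choose (l - 1) = (n - i + 1).choose l * l := by
    have := Nat.add_one_mul_choose_eq (n - i) (l - 1)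
    simpa [Nat.succ_eq_add_one, Nat.sub_add_cancel h1] using this
  rw [← h2]
  have h3 : n.choose i * (n - i).choose (l - 1)
      = n.choose (l - 1) * (n - (l - 1)).choose (n - i - (l - 1)) := by
    rw [← Nat.choose_symm (by omega : i ≤ n)]
    exact Nat.choose_mul (by omega)
  have h4 : (n - (l - 1)).choose (n - i - (l - 1)) = (n - l + 1).choose i := by
    have e1 : n - (l - 1) = n - l + 1 := by omega
    have e2 : n - i - (l - 1) = (n - l + 1) - i := by omega
    rw [e1, e2, Nat.choose_symm (by omega)]
  calc n.choose i * ((n - i + 1) * (n - i).choose (l - 1))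
      = n.choose i * (n - i).choose (l - 1) * (n - i + 1) := by ring
    _ = n.choose (l - 1) * (n - l + 1).choose i * (n - i + 1) := by rw [h3, h4]



lemma claimInner (n l : ℕ) (hn : 1 ≤ n) (hl : l ≤ n) :
    ∑ i ∈ range (n + 1 - l),
        (n.choose i : ℚ) * ((n - i + 1).choose l : ℚ) / (((n - i : ℕ) : ℚ) + 1) * bernoulli i
      = if l = n then 1 else 0 := by
  rcases Nat.eq_zero_or_pos l with rfl | hl1
  · -- l = 0
    have e : n + 1 - 0 = n + 1 := by omega
    rw [e]
    have hstep : ∀ i ∈ range (n + 1),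
        (n.choose i : ℚ) * ((n - i + 1).choose 0 : ℚ) / (((n - i : ℕ) : ℚ) + 1) * bernoulli i
          = ((n + 1).choose i : ℚ) * bernoulli i / ((n : ℚ) + 1) := by
      intro i hi
      rw [mem_range] at hi
      have hc := Nat.choose_mul_succ_eq n i
      have hc' : (n.choose i : ℚ) * ((n : ℚ) + 1)
          = ((n + 1).choose i : ℚ) * (((n - i : ℕ) : ℚ) + 1) := by
        have e2 : n + 1 - i = (n - i) + 1 := by omega
        exact_mod_cast (by rw [hc, e2] : n.choose i * (n + 1) = (n+1).choose i * ((n - i) + 1))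
      have d1 : (((n - i : ℕ) : ℚ) + 1) ≠ 0 := by positivity
      have d2 : ((n : ℚ) + 1) ≠ 0 := by positivity
      simp only [Nat.choose_zero_right, Nat.cast_one, mul_one]
      field_simp
      linear_combination bernoulli i * hc'
    rw [sum_congr rfl hstep, ← sum_div]
    have := sum_bernoulli (n + 1)
    simp only [this]
    have h1 : n + 1 ≠ 1 := by omega
    rw [if_neg h1, zero_div, if_neg (by omega : ¬ (0 = n))]
  · -- 1 ≤ l
    have hstep : ∀ i ∈ range (n + 1 - l),
        (n.choose i : ℚ) * ((n - i + 1).choose l : ℚ) / (((n - i : ℕ) : ℚ) + 1) * bernoulli i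
          = (n.choose (l - 1) : ℚ) / (l : ℚ) *
              (((n - l + 1).choose i : ℚ) * bernoulli i) := by
      intro i hi
      rw [mem_range] at hi
      have hkey := chooseNat n i l hl1 (by omega)
      have hkey' : (n.choose i : ℚ) * (((n - i + 1).choose l : ℚ) * (l : ℚ))
          = (n.choose (l - 1) : ℚ) * ((n - l + 1).choose i : ℚ) * (((n - i : ℕ) : ℚ) + 1) := by
        exact_mod_cast congrArg (Nat.cast (R := ℚ)) hkey
      have d1 : (((n - i : ℕ) : ℚ) + 1) ≠ 0 := by positivity
      have d2 : (l : ℚ) ≠ 0 := by exact_mod_cast hl1.ne'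
      field_simp
      linear_combination bernoulli i * hkey'
    rw [sum_congr rfl hstep, ← mul_sum]
    have e : n + 1 - l = (n - l) + 1 := by omega
    rw [e]
    have hsb := sum_bernoulli ((n - l) + 1)
    rw [hsb]
    rcases eq_or_ne l n with h | hne
    · rw [if_pos (by omega : n - l + 1 = 1), if_pos h, h]
      have e3 : n.choose (n - 1) = n := by
        rw [Nat.choose_symm (by omega : 1 ≤ n), Nat.choose_one_right]
      rw [e3, mul_one, div_self (by exact_mod_cast (by omega : n ≠ 0) : (n:ℚ) ≠ 0)]
    · rw [if_neg (by omega : ¬ (n - l + 1 = 1)), if_neg hne, mul_zero]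


lemma raabe (n a : ℕ) (hn : 1 ≤ n) (ha : 0 < a) :
    (a : ℚ) ^ (n - 1) * ∑ t ∈ range a, (Polynomial.bernoulli n).eval ((t : ℚ) / a)
      = bernoulli n := by
  have ha0 : (a : ℚ) ≠ 0 := by positivity
  simp_rw [div_eq_inv_mul]
  rw [expand n a (a : ℚ)⁻¹, Finset.mul_sum]
  have stepA : ∀ i ∈ range (n + 1),
      (a : ℚ) ^ (n - 1) *
          (bernoulli i * (n.choose i : ℚ) * ((a : ℚ)⁻¹) ^ (n - i) * psi a (n - i))
        = ∑ l ∈ range (n + 1 - i),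
            bernoulli l * (a : ℚ) ^ (n - l) *
              ((n.choose i : ℚ) * ((n - i + 1).choose l : ℚ) / (((n - i : ℕ) : ℚ) + 1) *
                bernoulli i) := by
    intro i hi
    rw [mem_range] at hi
    rw [psi_eq a (n - i), Finset.mul_sum, Finset.mul_sum]
    refine Finset.sum_congr (by congr 1; omega) fun l hl => ?_
    rw [mem_range] at hl
    have hpow : (a : ℚ) ^ (n - 1) * ((a : ℚ)⁻¹) ^ (n - i) * (a : ℚ) ^ (n - i + 1 - l)
        = (a : ℚ) ^ (n - l) := by
      rw [inv_pow, mul_comm ((a : ℚ) ^ (n - 1)), mul_assoc, ← pow_add]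
      rw [show n - 1 + (n - i + 1 - l) = (n - i) + (n - l) by omega, pow_add]
      rw [inv_mul_cancel_left₀ (pow_ne_zero _ ha0)]
    calc (a : ℚ) ^ (n - 1) *
          (bernoulli i * (n.choose i : ℚ) * ((a : ℚ)⁻¹) ^ (n - i) *
            (bernoulli l * (((n - i) + 1).choose l : ℚ) * (a : ℚ) ^ ((n - i) + 1 - l) /
              (((n - i : ℕ) : ℚ) + 1)))
        = ((a : ℚ) ^ (n - 1) * ((a : ℚ)⁻¹) ^ (n - i) * (a : ℚ) ^ (n - i + 1 - l)) *
            (bernoulli i * (n.choose i : ℚ) * (bernoulli l * (((n - i) + 1).choose l : ℚ) /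
              (((n - i : ℕ) : ℚ) + 1))) := by ring
      _ = _ := by rw [hpow]; ring
  rw [sum_congr rfl stepA, triangle (n + 1)]
  have stepC : ∀ l ∈ range (n + 1),
      ∑ i ∈ range (n + 1 - l),
          bernoulli l * (a : ℚ) ^ (n - l) *
            ((n.choose i : ℚ) * ((n - i + 1).choose l : ℚ) / (((n - i : ℕ) : ℚ) + 1) *
              bernoulli i)
        = if l = n then bernoulli l * (a : ℚ) ^ (n - l) else 0 := by
    intro l hl
    rw [mem_range] at hl
    rw [← Finset.mul_sum, claimInner n l hn (by omega)]
    by_cases h : l = n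
    · rw [if_pos h, if_pos h, mul_one]
    · rw [if_neg h, if_neg h, mul_zero]
  rw [sum_congr rfl stepC, Finset.sum_ite_eq' (range (n + 1)) n
    (fun l => bernoulli l * (a : ℚ) ^ (n - l))]
  rw [if_pos (self_mem_range_succ n)]
  simp


end SylvesterAux

namespace CombAux

section
variable (a b : ℕ)

/-- the residue `n * b⁻¹ mod a`. -/
noncomputable def finv (n : ℕ) : ℕ := ((n : ZMod a) * (b : ZMod a)⁻¹).val

variable [NeZero a]

lemma finv_lt (n : ℕ) : finv a b n < a := ZMod.val_lt _

lemma cast_mul_finv (hab : Nat.Coprime a b) (n : ℕ) : ((b * finv a b n : ℕ) : ZMod a) = (n : ZMod a) := by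
  have hbu : IsUnit (b : ZMod a) := (ZMod.isUnit_iff_coprime b a).2 hab.symm
  push_cast [finv]
  rw [ZMod.natCast_rightInverse _]
  rw [mul_comm ((n : ZMod a)) _, ← mul_assoc, ZMod.mul_inv_of_unit _ hbu, one_mul]

lemma finv_eq (hab : Nat.Coprime a b) (n t : ℕ) (hlt : t < a) (h : ((b * t : ℕ) : ZMod a) = (n : ZMod a)) :
    finv a b n = t := by
  have hbu : IsUnit (b : ZMod a) := (ZMod.isUnit_iff_coprime b a).2 hab.symm
  push_cast at h
  have : ((t : ℕ) : ZMod a) = (n : ZMod a) * (b : ZMod a)⁻¹ := by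
    rw [← h, mul_comm ((b : ZMod a)) _, mul_assoc, ZMod.mul_inv_of_unit _ hbu, mul_one]
  rw [finv, ← this, ZMod.val_cast_of_lt hlt]

lemma finv_modclass (hab : Nat.Coprime a b) (t u : ℕ) (hlt : t < a) : finv a b (b * t % a + u * a) = t := by
  apply finv_eq a b hab _ _ hlt
  have : ((b * t % a + u * a : ℕ) : ZMod a) = ((b * t : ℕ) : ZMod a) := by
    push_cast
    rw [ZMod.natCast_self, mul_zero, add_zero, ZMod.natCast_mod]
    push_cast
    ring
  rw [this]

lemma mod_finv (hab : Nat.Coprime a b) (c : ℕ) (hc : c < a) : b * finv a b c % a = c := by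
  have := (ZMod.natCast_eq_natCast_iff _ _ _).1 (cast_mul_finv a b hab c)
  have h2 : b * finv a b c % a = c % a := this
  rwa [Nat.mod_eq_of_lt hc] at h2

lemma mod_pos (hab : Nat.Coprime a b) (ha : 0 < a) (t : ℕ) (h1 : 1 ≤ t) (h2 : t < a) : 1 ≤ b * t % a := by
  rcases Nat.eq_zero_or_pos (b * t % a) with h0 | h
  · exfalso
    have hdvd : a ∣ b * t := Nat.dvd_of_mod_eq_zero h0
    have : a ∣ t := (Nat.Coprime.dvd_of_dvd_mul_left hab hdvd)
    have := Nat.le_of_dvd (by omega) this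
    omega
  · exact h

end

lemma NR_sum_eq (a b : ℕ) (ha : 2 ≤ a) (hb : 2 ≤ b) (hab : Nat.Coprime a b)
    (NR : Finset ℕ)
    (hNR : ∀ n : ℕ, n ∈ NR ↔ 0 < n ∧ ¬ ∃ x y : ℕ, n = a * x + b * y) (p : ℕ) :
    ∑ n ∈ NR, (n : ℚ) ^ p
      = ∑ t ∈ Ico 1 a, ∑ u ∈ range (b * t / a), (((b * t % a) + u * a : ℕ) : ℚ) ^ p := by
  haveI : NeZero a := ⟨by omega⟩
  have ha0 : 0 < a := by omega
  -- representability criterion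
  have hrep : ∀ n : ℕ, (∃ x y : ℕ, n = a * x + b * y) ↔ b * finv a b n ≤ n := by
    intro n
    constructor
    · rintro ⟨x, y, rfl⟩
      have h1 : finv a b (a * x + b * y) = y % a := by
        apply finv_eq a b hab _ _ (Nat.mod_lt _ ha0)
        push_cast
        rw [ZMod.natCast_self, zero_mul, zero_add, ZMod.natCast_mod]
      rw [h1]
      calc b * (y % a) ≤ b * y := Nat.mul_le_mul_left _ (Nat.mod_le _ _)
        _ ≤ a * x + b * y := Nat.le_add_left _ _
    · intro hle
      have hd : a ∣ (n - b * finv a b n) := by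
        have h0 : ((n - b * finv a b n : ℕ) : ZMod a) = 0 := by
          rw [Nat.cast_sub hle, cast_mul_finv a b hab, sub_self]
        exact (ZMod.natCast_eq_zero_iff _ _).1 h0
      obtain ⟨x, hx⟩ := hd
      exact ⟨x, finv a b n, by omega⟩
  have hmem : ∀ n : ℕ, n ∈ NR ↔ 0 < n ∧ n < b * finv a b n := by
    intro n
    rw [hNR n]
    constructor
    · rintro ⟨h1, h2⟩
      exact ⟨h1, by rw [← Nat.not_le]; exact fun h => h2 ((hrep n).2 h)⟩
    · rintro ⟨h1, h2⟩
      exact ⟨h1, fun h => by have := (hrep n).1 h; omega⟩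
  have hNReq : NR = (Ico 1 a).biUnion
      (fun t => (range (b * t / a)).image (fun u => b * t % a + u * a)) := by
    ext n
    simp only [mem_biUnion, mem_Ico, mem_image, mem_range]
    rw [hmem n]
    constructor
    · rintro ⟨hn0, hnlt⟩
      have hf1 : 1 ≤ finv a b n := by
        rcases Nat.eq_zero_or_pos (finv a b n) with h0 | h
        · rw [h0] at hnlt; omega
        · exact h
      have hmod : n % a = b * finv a b n % a := by
        have := (ZMod.natCast_eq_natCast_iff _ _ _).1 (cast_mul_finv a b hab n)
        exact this.symm
      have h1 := Nat.mod_add_div' n a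
      have h2 := Nat.mod_add_div' (b * finv a b n) a
      refine ⟨finv a b n, ⟨hf1, finv_lt a b n⟩, n / a, ?_, ?_⟩
      · by_contra hcon
        push_neg at hcon
        have h3 : (b * finv a b n / a) * a ≤ (n / a) * a := Nat.mul_le_mul_right a hcon
        omega
      · omega
    · rintro ⟨t, ⟨ht1, hta⟩, u, hu, rfl⟩
      have hr1 : 1 ≤ b * t % a := mod_pos a b hab ha0 t ht1 hta
      have hft := finv_modclass a b hab t u hta
      rw [hft]
      have h2 := Nat.mod_add_div' (b * t) a
      have hmul : (u + 1) * a ≤ (b * t / a) * a := Nat.mul_le_mul_right a hu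
      have hmul' : u * a + a ≤ (b * t / a) * a := by
        have e : (u + 1) * a = u * a + a := by ring
        omega
      constructor
      · omega
      · omega
  have hdisj : (↑(Ico 1 a) : Set ℕ).PairwiseDisjoint
      (fun t => (range (b * t / a)).image (fun u => b * t % a + u * a)) := by
    intro t ht t' ht' hne
    simp only [Finset.coe_Ico, Set.mem_Ico] at ht ht'
    rw [Function.onFun, Finset.disjoint_left]
    rintro n hn hn'
    simp only [mem_image, mem_range] at hn hn'
    obtain ⟨u, _, rfl⟩ := hn
    obtain ⟨u', _, he⟩ := hn'
    have e1 := finv_modclass a b hab t u ht.2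
    have e2 := finv_modclass a b hab t' u' ht'.2
    rw [he] at e2
    exact hne (e1.symm.trans e2)
  rw [hNReq, Finset.sum_biUnion hdisj]
  refine sum_congr rfl fun t ht => ?_
  rw [Finset.sum_image]
  intro u hu v hv h
  beta_reduce at h
  have : u * a = v * a := by omega
  exact Nat.eq_of_mul_eq_mul_right ha0 this

end CombAux


open Finset SylvesterAux in
/-- Equation (5.x.1b): for coprime `a, b ≥ 2` and `m ≥ 2`,
`m(m−1)·S_{m−2} = ∑_{j=0}^{m} C(m,j)·a^{m−1−j}·B_{m−j}·b^{j−1}·φ_j(a) − m·B_{m−1}`,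
where `φ_j(x) = B_j(x) − B_j` is the Bernoullian polynomial, and the powers
`a^{m−1−j}`, `b^{j−1}` are interpreted in `ℚ` (integer exponents). -/
theorem sylvester_sum_two_variable_convolution
    (a b : ℕ) (ha : 2 ≤ a) (hb : 2 ≤ b) (hab : Nat.Coprime a b)
    (NR : Finset ℕ)
    (hNR : ∀ n : ℕ, n ∈ NR ↔ 0 < n ∧ ¬ ∃ x y : ℕ, n = a * x + b * y)
    (m : ℕ) (hm : 2 ≤ m) :
    (m : ℚ) * ((m : ℚ) - 1) * ∑ n ∈ NR, (n : ℚ) ^ (m - 2) =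
      ∑ j ∈ Finset.range (m + 1),
        (m.choose j : ℚ) * (a : ℚ) ^ ((m : ℤ) - 1 - (j : ℤ)) * bernoulli (m - j) *
          (b : ℚ) ^ ((j : ℤ) - 1) *
          ((Polynomial.bernoulli j).eval (a : ℚ) - bernoulli j)
      - (m : ℚ) * bernoulli (m - 1) := by
  obtain ⟨p, rfl⟩ : ∃ p, m = p + 2 := ⟨m - 2, by omega⟩
  clear hm
  haveI : NeZero a := ⟨by omega⟩
  have ha0 : (a : ℚ) ≠ 0 := by
    have : (0 : ℚ) < a := by exact_mod_cast (by omega : 0 < a)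
    exact this.ne'
  have hp1 : ((p : ℚ) + 1) ≠ 0 := by positivity
  rw [show p + 2 - 2 = p by omega, show p + 2 - 1 = p + 1 by omega]
  rw [CombAux.NR_sum_eq a b ha hb hab NR hNR p]
  -- inner sums
  have hinner : ∀ t ∈ Ico 1 a,
      ((p : ℚ) + 1) * ∑ u ∈ range (b * t / a), (((b * t % a) + u * a : ℕ) : ℚ) ^ p
        = (a : ℚ) ^ p *
            ((Polynomial.bernoulli (p + 1)).eval ((b : ℚ) / (a : ℚ) * t)
              - (Polynomial.bernoulli (p + 1)).eval (((b * t % a : ℕ) : ℚ) / a)) := by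
    intro t ht
    have hcast : ∀ u : ℕ, (((b * t % a) + u * a : ℕ) : ℚ)
        = (a : ℚ) * (((b * t % a : ℕ) : ℚ) / a + u) := by
      intro u; push_cast; field_simp
    have harg : ((b * t % a : ℕ) : ℚ) / a + ((b * t / a : ℕ) : ℚ) = (b : ℚ) / a * t := by
      have h2 : ((b * t % a : ℕ) : ℚ) + ((b * t / a : ℕ) : ℚ) * (a : ℚ) = (b : ℚ) * t := by
        exact_mod_cast congrArg (Nat.cast (R := ℚ)) (Nat.mod_add_div' (b * t) a)
      field_simp
      linear_combination h2
    calc ((p : ℚ) + 1) * ∑ u ∈ range (b * t / a), (((b * t % a) + u * a : ℕ) : ℚ) ^ p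
        = (a : ℚ) ^ p * (((p : ℚ) + 1) *
            ∑ u ∈ range (b * t / a), (((b * t % a : ℕ) : ℚ) / a + u) ^ p) := by
          rw [Finset.mul_sum, Finset.mul_sum, Finset.mul_sum]
          refine sum_congr rfl fun u hu => ?_
          rw [hcast u, mul_pow]; ring
      _ = _ := by
          rw [tele p (((b * t % a : ℕ) : ℚ) / a) (b * t / a), harg]
  have hQ1 : ∑ t ∈ Ico 1 a, (Polynomial.bernoulli (p + 1)).eval ((b : ℚ) / (a : ℚ) * t)
      = (∑ t ∈ range a, (Polynomial.bernoulli (p + 1)).eval ((b : ℚ) / (a : ℚ) * t))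
        - (Polynomial.bernoulli (p + 1)).eval 0 := by
    rw [Finset.range_eq_Ico, Finset.sum_eq_sum_Ico_succ_bot (by omega : 0 < a)]
    simp only [Nat.cast_zero, mul_zero]
    ring
  have hbij : ∑ t ∈ Ico 1 a, (Polynomial.bernoulli (p + 1)).eval (((b * t % a : ℕ) : ℚ) / a)
      = ∑ c ∈ Ico 1 a, (Polynomial.bernoulli (p + 1)).eval ((c : ℚ) / a) := by
    refine Finset.sum_nbij' (i := fun t => b * t % a) (j := fun c => CombAux.finv a b c)
      ?_ ?_ ?_ ?_ ?_
    · intro t ht; rw [mem_Ico] at ht ⊢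
      exact ⟨CombAux.mod_pos a b hab (by omega) t ht.1 ht.2, Nat.mod_lt _ (by omega)⟩
    · intro c hc; rw [mem_Ico] at hc ⊢
      refine ⟨?_, CombAux.finv_lt a b c⟩
      rcases Nat.eq_zero_or_pos (CombAux.finv a b c) with h0 | h
      · exfalso
        have hmf := CombAux.mod_finv a b hab c hc.2
        rw [h0] at hmf
        simp at hmf
        omega
      · exact h
    · intro t ht; rw [mem_Ico] at ht
      exact CombAux.finv_eq a b hab _ t ht.2 (ZMod.natCast_mod (b * t) a).symm
    · intro c hc; rw [mem_Ico] at hc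
      exact CombAux.mod_finv a b hab c hc.2
    · intro t ht; rfl
  have hQ2 : ∑ c ∈ Ico 1 a, (Polynomial.bernoulli (p + 1)).eval ((c : ℚ) / a)
      = (∑ t ∈ range a, (Polynomial.bernoulli (p + 1)).eval ((t : ℚ) / a))
        - (Polynomial.bernoulli (p + 1)).eval 0 := by
    rw [Finset.range_eq_Ico, Finset.sum_eq_sum_Ico_succ_bot (by omega : 0 < a)]
    simp only [Nat.cast_zero, zero_div]
    ring
  have hsum : ((p : ℚ) + 1) * ∑ t ∈ Ico 1 a,
        ∑ u ∈ range (b * t / a), (((b * t % a) + u * a : ℕ) : ℚ) ^ p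
      = (a : ℚ) ^ p *
          ((∑ t ∈ range a, (Polynomial.bernoulli (p + 1)).eval ((b : ℚ) / (a : ℚ) * t))
            - ∑ t ∈ range a, (Polynomial.bernoulli (p + 1)).eval ((t : ℚ) / a)) := by
    rw [Finset.mul_sum, sum_congr rfl hinner, ← Finset.mul_sum, Finset.sum_sub_distrib,
      hQ1, hbij, hQ2]
    ring
  have hQ2v : (a : ℚ) ^ p * ∑ t ∈ range a, (Polynomial.bernoulli (p + 1)).eval ((t : ℚ) / a)
      = bernoulli (p + 1) := by
    have := raabe (p + 1) a (by omega) (by omega)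
    simpa using this
  have hmain : ((p : ℚ) + 2) *
        ((a : ℚ) ^ p * ∑ t ∈ range a, (Polynomial.bernoulli (p + 1)).eval ((b : ℚ) / (a : ℚ) * t))
      = ∑ j ∈ Finset.range (p + 2 + 1),
          ((p + 2).choose j : ℚ) * (a : ℚ) ^ (((p + 2 : ℕ) : ℤ) - 1 - (j : ℤ)) *
            bernoulli (p + 2 - j) * (b : ℚ) ^ ((j : ℤ) - 1) *
            ((Polynomial.bernoulli j).eval (a : ℚ) - bernoulli j) := by
    rw [expand (p + 1) a ((b : ℚ) / (a : ℚ))]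
    conv_rhs => rw [Finset.sum_range_succ']
    have hT0 : ((p + 2).choose 0 : ℚ) * (a : ℚ) ^ (((p + 2 : ℕ) : ℤ) - 1 - ((0 : ℕ) : ℤ)) *
          bernoulli (p + 2 - 0) * (b : ℚ) ^ (((0 : ℕ) : ℤ) - 1) *
          ((Polynomial.bernoulli 0).eval (a : ℚ) - bernoulli 0) = 0 := by
      simp [Polynomial.bernoulli_zero, bernoulli_zero]
    rw [hT0, add_zero, Finset.mul_sum, Finset.mul_sum]
    conv_rhs => rw [← Finset.sum_range_reflect]
    refine sum_congr rfl fun i hi => ?_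
    rw [mem_range] at hi
    have hip : i ≤ p + 1 := by omega
    have e0 : p + 2 - 1 - i + 1 = (p + 1 - i) + 1 := by omega
    rw [e0]
    have e1 : p + 2 - ((p + 1 - i) + 1) = i := by omega
    rw [e1]
    have ezpa : (a : ℚ) ^ (((p + 2 : ℕ) : ℤ) - 1 - (((p + 1 - i) + 1 : ℕ) : ℤ))
        = (a : ℚ) ^ p / (a : ℚ) ^ (p + 1 - i) := by
      have e : ((p + 2 : ℕ) : ℤ) - 1 - (((p + 1 - i) + 1 : ℕ) : ℤ)
          = (p : ℤ) - ((p + 1 - i : ℕ) : ℤ) := by push_cast; ring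
      rw [e, zpow_sub₀ ha0, zpow_natCast, zpow_natCast]
    rw [ezpa]
    have ezpb : (b : ℚ) ^ ((((p + 1 - i) + 1 : ℕ) : ℤ) - 1) = (b : ℚ) ^ (p + 1 - i) := by
      have e : (((p + 1 - i) + 1 : ℕ) : ℤ) - 1 = ((p + 1 - i : ℕ) : ℤ) := by push_cast; ring
      rw [e, zpow_natCast]
    rw [ezpb]
    have echoose : ((p : ℚ) + 2) * ((p + 1).choose i : ℚ)
        = (((p + 2).choose ((p + 1 - i) + 1) : ℕ) : ℚ) * (((p + 1 - i : ℕ) : ℚ) + 1) := by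
      have h1 : (p + 1).choose i = (p + 1).choose (p + 1 - i) := (Nat.choose_symm hip).symm
      have h2 := Nat.add_one_mul_choose_eq (p + 1) (p + 1 - i)
      rw [h1]
      exact_mod_cast congrArg (Nat.cast (R := ℚ)) h2
    rw [psi]
    have hd : (((p + 1 - i : ℕ) : ℚ) + 1) ≠ 0 := by positivity
    have hap : (a : ℚ) ^ (p + 1 - i) ≠ 0 := pow_ne_zero _ ha0
    rw [div_pow]
    generalize hPHI : (Polynomial.eval (a : ℚ) (Polynomial.bernoulli (p + 1 - i + 1))
      - bernoulli (p + 1 - i + 1)) = PHI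
    generalize hQc : ((p + 1 - i : ℕ) : ℚ) = Q at hd echoose ⊢
    calc ((p : ℚ) + 2) * ((a : ℚ) ^ p * (bernoulli i * ((p + 1).choose i : ℚ) *
            ((b : ℚ) ^ (p + 1 - i) / (a : ℚ) ^ (p + 1 - i)) * (PHI / (Q + 1))))
        = (((p : ℚ) + 2) * ((p + 1).choose i : ℚ)) *
            ((a : ℚ) ^ p / (a : ℚ) ^ (p + 1 - i) * bernoulli i * (b : ℚ) ^ (p + 1 - i) *
              (PHI / (Q + 1))) := by ring
      _ = ((((p + 2).choose ((p + 1 - i) + 1) : ℕ) : ℚ) * (Q + 1)) *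
            ((a : ℚ) ^ p / (a : ℚ) ^ (p + 1 - i) * bernoulli i * (b : ℚ) ^ (p + 1 - i) *
              (PHI / (Q + 1))) := by rw [echoose]
      _ = (((p + 2).choose ((p + 1 - i) + 1) : ℕ) : ℚ) *
            ((a : ℚ) ^ p / (a : ℚ) ^ (p + 1 - i)) * bernoulli i * (b : ℚ) ^ (p + 1 - i) * PHI := by
          field_simp
  rw [show ((p + 2 : ℕ) : ℚ) = (p : ℚ) + 2 by push_cast; ring]
  linear_combination ((p : ℚ) + 2) * hsum + hmain - ((p : ℚ) + 2) * hQ2v
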